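/- Pivotality observation: Fix $a \in \mathbb{Z}^d$ and let $u \neq v$ be two distinct neighbors of $a$, and set $t = v + u - a$. Consider site percolation and the event $E'(u,v;\{a\})$ (which entails $u \longleftrightarrow v$ and that there is no pivotal vertex $w$ for the connection with $u \xleftrightarrow{\{a\}} w$). Then on the event that additionally $t = a$ or $t$ is vacant, every occupied connection from $u$ to $v$ forces a path of length at least 4; that is, $E'(u,v;\{a\}) \cap (\{t = a\} \cup \{t \text{ vacant}\}) \subseteq \{u \xrightarrow{4} v\}$. -/

import Mathlib

open MeasureTheory
open scoped ENNReal NNReal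

/-- Vertices of the hypercubic lattice `ℤ^d`. -/
abbrev Vertex (d : ℕ) := Fin d → ℤ

/-- A site-percolation configuration: each vertex is occupied (`true`) or vacant. -/
abbrev Config (d : ℕ) := Vertex d → Bool

/-- The ℓ¹ norm `|x|₁ = ∑ᵢ |xᵢ|`. -/
def dist1 {d : ℕ} (x : Vertex d) : ℕ := ∑ i, (x i).natAbs

/-- Nearest neighbours. -/
def IsNbr {d : ℕ} (x y : Vertex d) : Prop := dist1 (x - y) = 1

/-- `ConnIn ω S l x y`: `x` is connected to `y` by a nearest-neighbour path with at
least `l` edges all of whose internal vertices are occupied in `ω` and lie in `S`. -/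
def ConnIn {d : ℕ} (ω : Config d) (S : Set (Vertex d)) (l : ℕ) (x y : Vertex d) : Prop :=
  x ≠ y ∧ ∃ (k : ℕ) (γ : ℕ → Vertex d), l ≤ k ∧ γ 0 = x ∧ γ k = y ∧
    (∀ i < k, IsNbr (γ i) (γ (i + 1))) ∧
    ∀ i, 0 < i → i < k → (ω (γ i) = true ∧ γ i ∈ S)

/-- `x ⟷ y` : connection by an occupied path. -/
def Conn {d : ℕ} (ω : Config d) (x y : Vertex d) : Prop := ConnIn ω Set.univ 1 x y

/-- `μ` is the law of i.i.d. Bernoulli(`p`) site percolation on `ℤ^d`. -/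
def IsBernoulli (d : ℕ) (p : ℝ) (μ : Measure (Config d)) : Prop :=
  IsProbabilityMeasure μ ∧
  ∀ (s : Finset (Vertex d)) (b : Vertex d → Bool),
    μ {ω | ∀ v ∈ s, ω v = b v} = ∏ v ∈ s, ENNReal.ofReal (if b v then p else 1 - p)

/-- The two-point function `τ_p(x)`. -/
noncomputable def tau {d : ℕ} (μ : Measure (Config d)) (x : Vertex d) : ℝ≥0∞ :=
  μ {ω | Conn ω 0 x}

/-- `τ_p^{(l)}(x)`: probability of a connection using at least `l` edges. -/
noncomputable def tauL {d : ℕ} (μ : Measure (Config d)) (l : ℕ) (x : Vertex d) : ℝ≥0∞ :=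
  μ {ω | ConnIn ω Set.univ l 0 x}

/-- `J(x) = 𝟙{|x|₁ = 1}` (ℝ≥0∞-valued). -/
noncomputable def Jfun {d : ℕ} (x : Vertex d) : ℝ≥0∞ := if dist1 x = 1 then 1 else 0

/-- `m`-fold convolution `J^{*m}` (ℝ≥0∞-valued). -/
noncomputable def Jpow {d : ℕ} : ℕ → Vertex d → ℝ≥0∞
  | 0, x => if x = 0 then 1 else 0
  | m + 1, x => ∑' y, Jfun y * Jpow m (x - y)

/-- `⟨A⟩`: the set `A` together with its nearest neighbours. -/
def thick {d : ℕ} (A : Set (Vertex d)) : Set (Vertex d) :=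
  A ∪ {y | ∃ x ∈ A, IsNbr x y}

/-- `u ⟶^A x`: `u ⟷ x` but every connecting path has an interior vertex in `⟨A⟩`,
or `x ∈ ⟨A⟩`. -/
def ThroughConn {d : ℕ} (ω : Config d) (A : Set (Vertex d)) (u x : Vertex d) : Prop :=
  Conn ω u x ∧ (¬ ConnIn ω (thick A)ᶜ 1 u x ∨ x ∈ thick A)

/-- `w` is pivotal for `{u ⟷ x}`. -/
def Pivotal {d : ℕ} (ω : Config d) (u x w : Vertex d) : Prop :=
  Conn (Function.update ω w true) u x ∧ ¬ Conn (Function.update ω w false) u x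

/-- `E'(v,u;A)`. -/
def Eprime {d : ℕ} (ω : Config d) (v u : Vertex d) (A : Set (Vertex d)) : Prop :=
  ThroughConn ω A v u ∧ ¬ ∃ u', Pivotal ω v u u' ∧ ThroughConn ω A v u'

section AuxLemmas

lemma dist1_single_le {d : ℕ} (x : Vertex d) (i : Fin d) : (x i).natAbs ≤ dist1 x :=
  Finset.single_le_sum (f := fun j => (x j).natAbs) (fun _ _ => Nat.zero_le _) (Finset.mem_univ i)

lemma dist1_eq_single {d : ℕ} {x : Vertex d} {i : Fin d} (h : ∀ k, k ≠ i → x k = 0) :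
    dist1 x = (x i).natAbs := by
  unfold dist1
  rw [Finset.sum_eq_single i]
  · intro b _ hb; rw [h b hb]; rfl
  · intro h'; exact absurd (Finset.mem_univ i) h'

lemma dist1_eq_pair {d : ℕ} {x : Vertex d} {i j : Fin d} (hij : i ≠ j)
    (h : ∀ k, k ≠ i → k ≠ j → x k = 0) :
    dist1 x = (x i).natAbs + (x j).natAbs := by
  unfold dist1
  rw [← Finset.sum_pair (f := fun k => (x k).natAbs) hij]
  refine (Finset.sum_subset (Finset.subset_univ _) ?_).symm
  intro k _ hk
  simp only [Finset.mem_insert, Finset.mem_singleton, not_or] at hk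
  rw [h k hk.1 hk.2]; rfl

lemma dist1_pair_le {d : ℕ} (x : Vertex d) {i j : Fin d} (hij : i ≠ j) :
    (x i).natAbs + (x j).natAbs ≤ dist1 x := by
  rw [← Finset.sum_pair (f := fun k => (x k).natAbs) hij]
  exact Finset.sum_le_sum_of_subset (Finset.subset_univ _)

lemma dist1_neg {d : ℕ} (x : Vertex d) : dist1 (-x) = dist1 x := by
  unfold dist1
  exact Finset.sum_congr rfl fun i _ => by simp

lemma unit_char {d : ℕ} {x : Vertex d} (h : dist1 x = 1) :
    ∃ i, (x i).natAbs = 1 ∧ ∀ j, j ≠ i → x j = 0 := by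
  unfold dist1 at h
  have hex : ∃ i : Fin d, (x i).natAbs ≠ 0 := by
    by_contra hc
    push_neg at hc
    rw [Finset.sum_eq_zero (fun i _ => hc i)] at h
    omega
  obtain ⟨i, hi⟩ := hex
  have hsplit : (x i).natAbs + ∑ j ∈ Finset.univ.erase i, (x j).natAbs = 1 := by
    rw [← h]; exact Finset.add_sum_erase _ (fun j => (x j).natAbs) (Finset.mem_univ i)
  have h1 : (x i).natAbs = 1 ∧ ∑ j ∈ Finset.univ.erase i, (x j).natAbs = 0 := by omega
  refine ⟨i, h1.1, fun j hj => ?_⟩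
  have := (Finset.sum_eq_zero_iff).mp h1.2 j (Finset.mem_erase.mpr ⟨hj, Finset.mem_univ j⟩)
  omega

lemma dist1_add_parity {d : ℕ} (x y : Vertex d) :
    dist1 (x + y) % 2 = (dist1 x + dist1 y) % 2 := by
  unfold dist1
  rw [Finset.sum_nat_mod, ← Finset.sum_add_distrib,
    Finset.sum_nat_mod (Finset.univ) 2 (fun i => (x i).natAbs + (y i).natAbs)]
  congr 1
  refine Finset.sum_congr rfl fun i _ => ?_
  have hxy : (x + y) i = x i + y i := rfl
  rw [hxy]
  omega

lemma path_parity {d : ℕ} (γ : ℕ → Vertex d) :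
    ∀ k, (∀ i < k, IsNbr (γ i) (γ (i+1))) → dist1 (γ 0 - γ k) % 2 = k % 2 := by
  intro k
  induction k with
  | zero => intro _; simp [dist1]
  | succ k ih =>
    intro h
    have h1 := ih (fun i hi => h i (by omega))
    have h2 : dist1 (γ k - γ (k+1)) = 1 := h k (by omega)
    have h3 := dist1_add_parity (γ 0 - γ k) (γ k - γ (k+1))
    rw [sub_add_sub_cancel, h2] at h3
    omega

lemma mid_lemma {d : ℕ} {p q r : Vertex d} (hp : dist1 p = 1) (hq : dist1 q = 1)
    (hpq : p ≠ q) (hr : dist1 r = 1) (h2 : dist1 (p + r - q) = 1) :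
    r = -p ∨ r = q := by
  obtain ⟨i, hpi, hp0⟩ := unit_char hp
  obtain ⟨j, hqj, hq0⟩ := unit_char hq
  obtain ⟨l, hrl, hr0⟩ := unit_char hr
  have yval : ∀ k, (p + r - q) k = p k + r k - q k := fun k => rfl
  by_cases hij : i = j
  · subst hij
    have hqi : q i ≠ p i := by
      intro hc
      apply hpq
      funext k
      by_cases hk : k = i
      · subst hk; omega
      · rw [hp0 k hk, hq0 k hk]
    by_cases hli : l = i
    · subst hli
      have hsup : ∀ k, k ≠ l → (p + r - q) k = 0 := by
        intro k hk; rw [yval, hp0 k hk, hq0 k hk, hr0 k hk]; ring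
      rw [dist1_eq_single hsup, yval] at h2
      left
      funext k
      by_cases hk : k = l
      · subst hk; show r k = -(p k); omega
      · simp [hr0 k hk, hp0 k hk]
    · exfalso
      have h3 := dist1_single_le (p + r - q) i
      rw [h2, yval, hr0 i (fun hc => hli hc.symm)] at h3
      omega
  · by_cases hli : l = i
    · subst hli
      have hsup : ∀ k, k ≠ l → k ≠ j → (p + r - q) k = 0 := by
        intro k hk1 hk2; rw [yval, hp0 k hk1, hq0 k hk2, hr0 k hk1]; ring
      rw [dist1_eq_pair hij hsup, yval, yval, hq0 l hij, hp0 j (Ne.symm hij),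
        hr0 j (Ne.symm hij)] at h2
      left
      funext k
      by_cases hk : k = l
      · subst hk; show r k = -(p k); omega
      · simp [hr0 k hk, hp0 k hk]
    · by_cases hlj : l = j
      · subst hlj
        have hsup : ∀ k, k ≠ i → k ≠ l → (p + r - q) k = 0 := by
          intro k hk1 hk2; rw [yval, hp0 k hk1, hq0 k hk2, hr0 k hk2]; ring
        rw [dist1_eq_pair hij hsup, yval, yval, hq0 i hij, hp0 l (Ne.symm hij),
          hr0 i (fun hc => hli hc.symm)] at h2
        right
        funext k
        by_cases hk : k = l
        · subst hk; omega
        · rw [hr0 k hk, hq0 k hk]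
      · exfalso
        have h3 := dist1_pair_le (p + r - q) hij
        rw [h2, yval, yval, hq0 i hij, hp0 j (Ne.symm hij),
          hr0 i (fun hc => hli hc.symm), hr0 j (fun hc => hlj hc.symm)] at h3
        omega

end AuxLemmas

/-- pivotality observation: for neighbours `u ≠ v` of `a` and
`t = v + u - a`, on `E'(u,v;{a})` together with (`t = a` or `t` vacant), the vertices
`u, v` are connected by an occupied path of at least 4 edges. -/
theorem pivotality_observation (d : ℕ) (a u v : Vertex d)
    (hu : IsNbr u a) (hv : IsNbr v a) (huv : u ≠ v) (ω : Config d)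
    (hE : Eprime ω u v {a}) (ht : v + u - a = a ∨ ω (v + u - a) = false) :
    ConnIn ω Set.univ 4 u v := by
  obtain ⟨⟨hConn, _⟩, hNoPiv⟩ := hE
  have hu' : dist1 (u - a) = 1 := hu
  have hv' : dist1 (v - a) = 1 := hv
  have hua : u ≠ a := by
    intro h
    rw [h, sub_self] at hu'
    simp [dist1] at hu'
  -- `u` is always connected to `a`, and `a ∈ thick {a}`.
  have hConnUA : Conn ω u a := by
    refine ⟨hua, 1, fun n => if n = 0 then u else a, le_refl 1, rfl, rfl, ?_, ?_⟩
    · intro i hi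
      have : i = 0 := by omega
      subst this
      simpa using hu
    · intro i h1 h2; omega
  have hTa : ThroughConn ω {a} u a := ⟨hConnUA, Or.inr (Or.inl rfl)⟩
  -- `a` is not pivotal for `{u ⟷ v}`, since making `a` occupied keeps the connection:
  have hPiv1 : Conn (Function.update ω a true) u v := by
    obtain ⟨hne, k, γ, hk, h0, hk2, hnb, hint⟩ := hConn
    refine ⟨hne, k, γ, hk, h0, hk2, hnb, fun i hi1 hi2 => ⟨?_, trivial⟩⟩
    have ho := (hint i hi1 hi2).1
    by_cases hc : γ i = a
    · rw [hc, Function.update_self]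
    · rw [Function.update_of_ne hc]; exact ho
  have hConnF : Conn (Function.update ω a false) u v := by
    by_contra hc
    exact hNoPiv ⟨a, ⟨hPiv1, hc⟩, hTa⟩
  obtain ⟨_, k, γ, hk1, h0, hkv, hnb, hint⟩ := hConnF
  have hint' : ∀ i, 0 < i → i < k → ω (γ i) = true ∧ γ i ≠ a := by
    intro i h1 h2
    have ho := (hint i h1 h2).1
    by_cases hc : γ i = a
    · rw [hc, Function.update_self] at ho
      exact absurd ho (by simp)
    · rw [Function.update_of_ne hc] at ho
      exact ⟨ho, hc⟩
  -- parity: `k` is even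
  have hpar := path_parity γ k hnb
  rw [h0, hkv] at hpar
  have hpar2 : dist1 (u - v) % 2 = 0 := by
    have h4 : u - v = (u - a) + (a - v) := by rw [sub_add_sub_cancel]
    have h5 : dist1 (a - v) = 1 := by
      rw [show a - v = -(v - a) by abel, dist1_neg]
      exact hv'
    rw [h4, dist1_add_parity, hu', h5]
  -- `k ≠ 0`
  have hk0 : k ≠ 0 := by
    intro h
    rw [h, h0] at hkv
    exact huv hkv
  -- `k ≠ 2` : a midpoint would have to be `a` or `t = v + u - a`
  have hk2 : k ≠ 2 := by
    intro h
    subst h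
    have hw1 : IsNbr u (γ 1) := by
      have := hnb 0 (by omega)
      rwa [h0] at this
    have hw2 : IsNbr (γ 1) v := by
      have := hnb 1 (by omega)
      rwa [hkv] at this
    obtain ⟨hocc, hna⟩ := hint' 1 (by omega) (by omega)
    set w := γ 1 with hwdef
    have hpq : u - a ≠ v - a := by
      intro hc
      exact huv (by simpa using congrArg (fun z => z + a) hc)
    have hr : dist1 (w - u) = 1 := by
      rw [show w - u = -(u - w) by abel, dist1_neg]
      exact hw1
    have h2 : dist1 ((u - a) + (w - u) - (v - a)) = 1 := by
      rw [show (u - a) + (w - u) - (v - a) = w - v by abel]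
      exact hw2
    rcases mid_lemma hu' hv' hpq hr h2 with hcase | hcase
    · -- w = a
      apply hna
      have : w - u = a - u := by rw [hcase, neg_sub]
      simpa using congrArg (fun z => z + u) this
    · -- w = v + u - a
      have hw : w = v + u - a := by
        have := congrArg (fun z => z + u) hcase
        rw [sub_add_cancel] at this
        rw [this]; abel
      rcases ht with h' | h'
      · exact hna (hw.trans h')
      · rw [← hw, hocc] at h'
        exact Bool.noConfusion h'
  have hk4 : 4 ≤ k := by omega
  exact ⟨huv, k, γ, hk4, h0, hkv, hnb, fun i h1 h2 => ⟨(hint' i h1 h2).1, trivial⟩⟩
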